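/- For every real x > 0, one has x/((1+x)·ln(1+x)) = ∫₁^∞ t/((t-1)·((ln(t-1))² + π²)) · 1/(x+t) dt. Consequently, the function x ↦ x/((1+x)·ln(1+x)) is a Stieltjes function (a representation of the form a/x + b + ∫₀^∞ dμ(s)/(s+x) with a = b = 0 and nonnegative density t ↦ t/((t-1)((ln(t-1))²+π²)) supported on (1,∞)). -/

import Mathlib

open MeasureTheory Real Set

lemma lemA {s : ℝ} (hs : 0 < s) :
    ∫ c in (0:ℝ)..1, s ^ c * Real.sin (π * c)
      = π * (s + 1) / ((Real.log s) ^ 2 + π ^ 2) := by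
  set a : ℝ := Real.log s with ha
  have hD : (0:ℝ) < a ^ 2 + π ^ 2 := by positivity
  set F : ℝ → ℝ := fun c => Real.exp (a * c) * (a * Real.sin (π * c) - π * Real.cos (π * c)) / (a ^ 2 + π ^ 2) with hF
  have hderiv : ∀ c : ℝ, HasDerivAt F (Real.exp (a * c) * Real.sin (π * c)) c := by
    intro c
    have h1 : HasDerivAt (fun c : ℝ => Real.exp (a * c)) (a * Real.exp (a * c)) c := by
      simpa [mul_comm] using (HasDerivAt.exp ((hasDerivAt_id c).const_mul a))
    have hsin : HasDerivAt (fun c : ℝ => Real.sin (π * c)) (π * Real.cos (π * c)) c := by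
      simpa [mul_comm] using ((hasDerivAt_id c).const_mul π).sin
    have hcos : HasDerivAt (fun c : ℝ => Real.cos (π * c)) (-(π * Real.sin (π * c))) c := by
      simpa [mul_comm] using ((hasDerivAt_id c).const_mul π).cos
    have h2 : HasDerivAt (fun c : ℝ => a * Real.sin (π * c) - π * Real.cos (π * c))
        (a * (π * Real.cos (π * c)) - π * (-(π * Real.sin (π * c)))) c :=
      ((hsin.const_mul a).sub (hcos.const_mul π))
    have h3 := (h1.mul h2).div_const (a ^ 2 + π ^ 2)
    refine h3.congr_deriv ?_
    rw [div_eq_iff hD.ne']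
    ring
  have hcont : Continuous fun c : ℝ => Real.exp (a * c) * Real.sin (π * c) := by continuity
  have key := intervalIntegral.integral_eq_sub_of_hasDerivAt
      (f := F) (f' := fun c => Real.exp (a * c) * Real.sin (π * c))
      (fun c _ => hderiv c) (hcont.intervalIntegrable 0 1)
  have hint : ∀ c : ℝ, s ^ c * Real.sin (π * c) = Real.exp (a * c) * Real.sin (π * c) := by
    intro c; rw [Real.rpow_def_of_pos hs]
  calc ∫ c in (0:ℝ)..1, s ^ c * Real.sin (π * c)
      = ∫ c in (0:ℝ)..1, Real.exp (a * c) * Real.sin (π * c) := by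
        simp_rw [hint]
    _ = F 1 - F 0 := key
    _ = π * (s + 1) / (a ^ 2 + π ^ 2) := by
        have : Real.exp a = s := by rw [ha, Real.exp_log hs]
        simp [hF, this, Real.sin_pi, Real.cos_pi]
        ring

lemma lemB0 {c : ℝ} (hc0 : 0 < c) (hc1 : c < 1) :
    ∫ x in (0:ℝ)..1, x ^ (c - 1) * (1 - x) ^ (-c) = π / Real.sin (π * c) := by
  have hre : (0:ℝ) < (c:ℂ).re := by simpa using hc0
  have hre' : (0:ℝ) < ((1:ℂ) - c).re := by simp [Complex.sub_re]; linarith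
  have h1 := Complex.Gamma_mul_Gamma_eq_betaIntegral hre hre'
  rw [show (c:ℂ) + (1 - c) = 1 by ring, Complex.Gamma_one, one_mul] at h1
  have h2 := Complex.Gamma_mul_Gamma_one_sub (c:ℂ)
  rw [h1] at h2
  -- h2 : betaIntegral c (1-c) = π / sin (π c)  (complex)
  have h3 : ((∫ x in (0:ℝ)..1, x ^ (c - 1) * (1 - x) ^ (-c) : ℝ) : ℂ)
      = Complex.betaIntegral c (1 - c) := by
    rw [Complex.betaIntegral, ← intervalIntegral.integral_ofReal]
    refine intervalIntegral.integral_congr fun x hx => ?_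
    rw [uIcc_of_le zero_le_one] at hx
    push_cast
    rw [Complex.ofReal_cpow hx.1 (c-1), Complex.ofReal_cpow (by linarith [hx.2] : (0:ℝ) ≤ 1 - x) (-c)]
    push_cast
    norm_num
  have hsin : Real.sin (π * c) ≠ 0 := by
    apply ne_of_gt
    apply Real.sin_pos_of_pos_of_lt_pi (by positivity)
    nlinarith [Real.pi_pos]
  have h4 : (Complex.sin (π * c)) = ((Real.sin (π * c) : ℝ) : ℂ) := by
    push_cast [Complex.ofReal_sin]; ring_nf
  apply Complex.ofReal_injective
  rw [h3, h2, h4]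
  push_cast
  ring

lemma phi_deriv : ∀ x ∈ Ioo (0:ℝ) 1,
    HasDerivWithinAt (fun x : ℝ => x / (1 - x)) (((1-x)^2)⁻¹) (Ioo (0:ℝ) 1) x := by
  intro x hx
  have hne : (1:ℝ) - x ≠ 0 := by have := hx.2; intro h; nlinarith [hx.2]
  have h := (hasDerivAt_id x).div ((hasDerivAt_const x (1:ℝ)).sub (hasDerivAt_id x)) hne
  simp only [id_eq, Pi.sub_apply] at h
  have heq : (1 * (1 - x) - x * (0 - 1)) / (1 - x) ^ 2 = ((1-x)^2)⁻¹ := by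
    field_simp
    ring
  rw [heq] at h
  exact h.hasDerivWithinAt

lemma phi_inj : InjOn (fun x : ℝ => x / (1 - x)) (Ioo (0:ℝ) 1) := by
  intro x hx y hy hxy
  have h1 : (1:ℝ) - x ≠ 0 := by intro h; nlinarith [hx.2]
  have h2 : (1:ℝ) - y ≠ 0 := by intro h; nlinarith [hy.2]
  field_simp at hxy
  nlinarith [hxy]

lemma phi_image : (fun x : ℝ => x / (1 - x)) '' (Ioo (0:ℝ) 1) = Ioi (0:ℝ) := by
  ext u; constructor
  · rintro ⟨x, hx, rfl⟩
    exact div_pos hx.1 (by linarith [hx.2])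
  · intro hu
    have hu' : (0:ℝ) < u := mem_Ioi.mp hu
    refine ⟨u / (1 + u), ⟨by positivity, ?_⟩, ?_⟩
    · rw [div_lt_one (by positivity)]; linarith
    · have h1 : (1:ℝ) + u ≠ 0 := by positivity
      field_simp
      ring

lemma lemB1 {c : ℝ} (hc0 : 0 < c) (hc1 : c < 1) :
    (∫ u in Ioi (0:ℝ), u ^ (c - 1) / (1 + u) = π / Real.sin (π * c)) ∧
    IntegrableOn (fun u : ℝ => u ^ (c - 1) / (1 + u)) (Ioi (0:ℝ)) := by
  have key := integral_image_eq_integral_abs_deriv_smul measurableSet_Ioo phi_deriv phi_inj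
    (fun u : ℝ => u ^ (c - 1) / (1 + u))
  have key2 := integrableOn_image_iff_integrableOn_abs_deriv_smul measurableSet_Ioo phi_deriv phi_inj
    (fun u : ℝ => u ^ (c - 1) / (1 + u))
  rw [phi_image] at key key2
  have hcong : ∀ x ∈ Ioo (0:ℝ) 1,
      |((1-x)^2)⁻¹| • ((fun u : ℝ => u ^ (c - 1) / (1 + u)) (x / (1 - x)))
        = x ^ (c - 1) * (1 - x) ^ (-c) := by
    intro x hx
    have hx0 : (0:ℝ) < x := hx.1
    have hx1 : (0:ℝ) < 1 - x := by linarith [hx.2]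
    have h1 : (1:ℝ) + x / (1 - x) = (1 - x)⁻¹ := by field_simp; ring
    have h2 : (x / (1 - x)) ^ (c - 1) = x ^ (c-1) * (1 - x) ^ (1 - c) := by
      rw [Real.div_rpow hx0.le hx1.le, div_eq_mul_inv, ← Real.rpow_neg hx1.le,
        show -(c-1) = 1 - c by ring]
    have h3 : ((1-x):ℝ) ^ (1 - c) = (1-x) ^ (-c) * (1-x) := by
      rw [show (1 - c) = -c + 1 by ring, Real.rpow_add hx1, Real.rpow_one]
    rw [smul_eq_mul]
    simp only [h1, h2, h3]
    rw [abs_of_pos (by positivity)]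
    field_simp
  -- the Ioo integrand is integrable (from complex beta convergence)
  have hbc := Complex.betaIntegral_convergent (u := (c:ℂ)) (v := 1 - c)
    (by simpa using hc0) (by simp [Complex.sub_re]; linarith)
  have hIoc : IntegrableOn (fun x : ℝ => (x:ℂ) ^ ((c:ℂ) - 1) * ((1:ℂ) - x) ^ ((1:ℂ) - c - 1)) (Ioc (0:ℝ) 1) := by
    simpa [intervalIntegrable_iff_integrableOn_Ioc_of_le zero_le_one] using hbc
  have hIoo : IntegrableOn (fun x : ℝ => x ^ (c - 1) * (1 - x) ^ (-c)) (Ioo (0:ℝ) 1) := by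
    have := (hIoc.mono_set Ioo_subset_Ioc_self).re
    refine (integrableOn_congr_fun (fun x hx => ?_) measurableSet_Ioo).mp this
    have hx0 : (0:ℝ) ≤ x := hx.1.le
    have hx1 : (0:ℝ) ≤ 1 - x := by linarith [hx.2]
    rw [show ((1:ℂ) - c - 1) = ((-c : ℝ) : ℂ) by push_cast; ring,
      show ((1:ℂ) - (x:ℝ)) = (((1 - x : ℝ)):ℂ) by push_cast; ring,
      show ((c:ℂ) - 1) = ((c - 1 : ℝ) : ℂ) by push_cast; ring,
      ← Complex.ofReal_cpow hx1, ← Complex.ofReal_cpow hx0,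
      ← Complex.ofReal_mul]
    simp
  constructor
  · rw [key]
    rw [setIntegral_congr_fun measurableSet_Ioo hcong]
    rw [← integral_Ioc_eq_integral_Ioo, ← intervalIntegral.integral_of_le zero_le_one]
    exact lemB0 hc0 hc1
  · rw [key2]
    exact (integrableOn_congr_fun hcong measurableSet_Ioo).mpr hIoo


lemma lemB2 {c y : ℝ} (hc0 : 0 < c) (hc1 : c < 1) (hy : 0 < y) :
    (∫ s in Ioi (0:ℝ), s ^ (c - 1) / (s + y) = π * y ^ (c - 1) / Real.sin (π * c)) ∧
    IntegrableOn (fun s : ℝ => s ^ (c - 1) / (s + y)) (Ioi (0:ℝ)) := by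
  have hpt : ∀ x ∈ Ioi (0:ℝ),
      (fun s : ℝ => s ^ (c-1) / (s + y)) (y * x) = y ^ (c-2) * (x ^ (c-1) / (1 + x)) := by
    intro x hx
    have hx0 : (0:ℝ) < x := hx
    simp only
    have e2 : y ^ (c-1) = y ^ (c-2) * y := by
      rw [show (c-1:ℝ) = (c-2)+1 by ring, Real.rpow_add hy, Real.rpow_one]
    have h1 : (1:ℝ) + x ≠ 0 := by positivity
    rw [Real.mul_rpow hy.le hx0.le, e2, show y * x + y = y * (1 + x) by ring]
    field_simp
  have hmul := integral_comp_mul_left_Ioi (fun s : ℝ => s ^ (c-1) / (s + y)) 0 hy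
  rw [mul_zero] at hmul
  rw [setIntegral_congr_fun measurableSet_Ioi hpt, integral_const_mul, (lemB1 hc0 hc1).1] at hmul
  constructor
  · have h2 : ∫ s in Ioi (0:ℝ), s ^ (c - 1) / (s + y)
        = y * (y ^ (c-2) * (π / Real.sin (π * c))) := by
      rw [smul_eq_mul] at hmul
      have hI : (∫ x in Ioi (0:ℝ), (fun s : ℝ => s ^ (c-1) / (s + y)) x)
          = ∫ s in Ioi (0:ℝ), s ^ (c - 1) / (s + y) := rfl
      rw [hI] at hmul
      rw [hmul]
      field_simp
    rw [h2, ← mul_assoc, show y * y ^ (c-2) = y ^ (c-1) by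
      rw [show (c-1 : ℝ) = 1 + (c-2) by ring, Real.rpow_add hy, Real.rpow_one]]
    ring
  · have hiff := integrableOn_Ioi_comp_mul_left_iff (fun s : ℝ => s ^ (c-1) / (s + y)) 0 hy
    rw [mul_zero] at hiff
    rw [← hiff]
    refine (integrableOn_congr_fun (fun x hx => (hpt x hx).symm) measurableSet_Ioi).mp ?_
    exact ((lemB1 hc0 hc1).2.const_mul _)

lemma lemD {y : ℝ} (hy : 1 < y) :
    ∫ c in (0:ℝ)..1, y ^ (c - 1) = (y - 1) / (y * Real.log y) := by
  have hy0 : (0:ℝ) < y := by linarith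
  have hl : Real.log y ≠ 0 := ne_of_gt (Real.log_pos hy)
  have hderiv : ∀ c : ℝ, HasDerivAt (fun c : ℝ => Real.exp (Real.log y * (c - 1)) / Real.log y)
      (y ^ (c-1)) c := by
    intro c
    have h1 : HasDerivAt (fun c : ℝ => Real.log y * (c - 1)) (Real.log y) c := by
      simpa using (((hasDerivAt_id c).sub_const 1).const_mul (Real.log y))
    have h2 := (h1.exp).div_const (Real.log y)
    have : Real.exp (Real.log y * (c - 1)) * Real.log y / Real.log y
        = y ^ (c - 1) := by
      rw [mul_div_assoc, div_self hl, mul_one, ← Real.rpow_def_of_pos hy0]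
    rwa [this] at h2
  have hcont : Continuous fun c : ℝ => y ^ (c-1) := by
    have : (fun c : ℝ => y ^ (c-1)) = fun c => Real.exp (Real.log y * (c - 1)) := by
      funext c; rw [Real.rpow_def_of_pos hy0]
    rw [this]; continuity
  rw [intervalIntegral.integral_eq_sub_of_hasDerivAt (fun c _ => hderiv c)
    (hcont.intervalIntegrable 0 1)]
  rw [show Real.log y * (1 - 1) = 0 by ring, Real.exp_zero,
    show Real.log y * (0 - 1) = -Real.log y by ring, Real.exp_neg, Real.exp_log hy0]
  field_simp

lemma shift_eq (f : ℝ → ℝ) : ∫ t in Ioi (1:ℝ), f t = ∫ s in Ioi (0:ℝ), f (s + 1) := by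
  rw [← integral_indicator measurableSet_Ioi, ← integral_indicator measurableSet_Ioi,
    ← integral_add_right_eq_self (fun x => (Ioi (1:ℝ)).indicator f x) 1]
  congr 1
  funext x
  by_cases h : 0 < x
  · rw [indicator_of_mem (by simpa using h), indicator_of_mem (by simp; linarith)]
  · rw [indicator_of_notMem (by simpa using h), indicator_of_notMem (by simp; linarith [not_lt.mp h])]

lemma shift_int (f : ℝ → ℝ) :
    IntegrableOn f (Ioi (1:ℝ)) ↔ IntegrableOn (fun s => f (s + 1)) (Ioi (0:ℝ)) := by
  rw [← integrable_indicator_iff measurableSet_Ioi, ← integrable_indicator_iff measurableSet_Ioi]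
  have h := ((measurePreserving_add_right (volume : Measure ℝ) 1).integrable_comp_emb
      (MeasurableEquiv.addRight (1:ℝ)).measurableEmbedding
      (g := (Ioi (1:ℝ)).indicator f))
  rw [← h]
  apply integrable_congr
  filter_upwards with x
  show (Ioi (1:ℝ)).indicator f (x + 1) = (Ioi (0:ℝ)).indicator (fun s => f (s+1)) x
  by_cases hx : 0 < x
  · rw [indicator_of_mem (by simp; linarith) f, indicator_of_mem (by simpa using hx)]
  · rw [indicator_of_notMem (by simp; linarith [not_lt.mp hx]) f,
      indicator_of_notMem (by simpa using hx)]

lemma lemKey {y : ℝ} (hy : 1 < y) :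
    (∫ s in Ioi (0:ℝ), (s + 1) / (s * ((Real.log s) ^ 2 + π ^ 2) * (s + y))
      = (y - 1) / (y * Real.log y)) ∧
    IntegrableOn (fun s : ℝ => (s + 1) / (s * ((Real.log s) ^ 2 + π ^ 2) * (s + y)))
      (Ioi (0:ℝ)) := by
  have hy0 : (0:ℝ) < y := by linarith
  set μ : Measure ℝ := volume.restrict (Ioi (0:ℝ)) with hμ
  set ν : Measure ℝ := volume.restrict (Ioc (0:ℝ) 1) with hν
  set G : ℝ → ℝ → ℝ := fun s c => s ^ (c - 1) * Real.sin (π * c) / (s + y) with hG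
  -- measurability
  have hmeas : AEStronglyMeasurable (Function.uncurry G) (μ.prod ν) := by
    have hM : Measurable (fun p : ℝ × ℝ =>
        Real.exp (Real.log p.1 * (p.2 - 1)) * Real.sin (π * p.2) / (p.1 + y)) := by
      apply Measurable.div
      · exact ((Real.measurable_exp.comp
            ((Real.measurable_log.comp measurable_fst).mul
              (measurable_snd.sub measurable_const))).mul
          (Real.measurable_sin.comp (measurable_const.mul measurable_snd)))
      · exact measurable_fst.add measurable_const
    have h0 : (μ.prod ν) {p : ℝ × ℝ | ¬ p.1 ∈ Ioi (0:ℝ)} = 0 := by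
      have hset : {p : ℝ × ℝ | ¬ p.1 ∈ Ioi (0:ℝ)} = (Ioi (0:ℝ))ᶜ ×ˢ (univ : Set ℝ) := by
        ext p; simp
      rw [hset, Measure.prod_prod, hμ, Measure.restrict_apply (measurableSet_Ioi.compl)]
      simp only [compl_Ioi, Set.Iic_inter_Ioi, le_refl, Set.Ioc_self, measure_empty, zero_mul]
    have hp : ∀ᵐ p : ℝ × ℝ ∂(μ.prod ν), p.1 ∈ Ioi (0:ℝ) := ae_iff.mpr h0
    apply hM.aestronglyMeasurable.congr
    filter_upwards [hp] with p hp1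
    show Real.exp (Real.log p.1 * (p.2 - 1)) * Real.sin (π * p.2) / (p.1 + y)
        = Function.uncurry G p
    rw [Function.uncurry, hG]
    simp only
    rw [Real.rpow_def_of_pos hp1]
  -- a.e. c in Ioo 0 1
  have hae : ∀ᵐ c ∂ν, c ∈ Ioo (0:ℝ) 1 := by
    have h1 : ∀ᵐ c : ℝ ∂ν, c ≠ 1 := by
      refine ae_restrict_of_ae ?_
      rw [ae_iff]
      have : {c : ℝ | ¬ c ≠ 1} = {1} := by ext c; simp
      rw [this]
      exact measure_singleton 1
    filter_upwards [h1, ae_restrict_mem measurableSet_Ioc] with c h1 h2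
    exact ⟨h2.1, lt_of_le_of_ne h2.2 h1⟩
  -- per-c facts on Ioo
  have hGc : ∀ c ∈ Ioo (0:ℝ) 1, (Integrable (fun s => G s c) μ ∧
      ∫ s, G s c ∂μ = π * y ^ (c - 1)) := by
    intro c hc
    have hsin : (0:ℝ) < Real.sin (π * c) := by
      apply Real.sin_pos_of_pos_of_lt_pi (mul_pos Real.pi_pos hc.1)
      nlinarith [Real.pi_pos, hc.2]
    have hcongr : ∀ s ∈ Ioi (0:ℝ), Real.sin (π * c) * (s ^ (c-1) / (s + y)) = G s c := by
      intro s hs; simp only [hG]; ring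
    constructor
    · refine (integrableOn_congr_fun hcongr measurableSet_Ioi).mp ?_
      exact ((lemB2 hc.1 hc.2 hy0).2.const_mul _)
    · rw [hμ, ← setIntegral_congr_fun measurableSet_Ioi hcongr, integral_const_mul,
        (lemB2 hc.1 hc.2 hy0).1]
      field_simp
  -- product integrability
  have hInt : Integrable (Function.uncurry G) (μ.prod ν) := by
    rw [integrable_prod_iff' hmeas]
    constructor
    · filter_upwards [hae] with c hc
      exact (hGc c hc).1
    · apply Integrable.congr (f := fun c : ℝ => π * y ^ (c - 1))
      · apply Integrable.mono_measure ?_ (Measure.restrict_mono Ioc_subset_Icc_self le_rfl)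
        apply ContinuousOn.integrableOn_compact isCompact_Icc
        apply Continuous.continuousOn
        have : (fun c : ℝ => π * y ^ (c-1)) = fun c => π * Real.exp (Real.log y * (c - 1)) := by
          funext c; rw [Real.rpow_def_of_pos hy0]
        rw [this]; continuity
      · filter_upwards [hae] with c hc
        have hnn : ∀ s ∈ Ioi (0:ℝ), ‖Function.uncurry G (s, c)‖ = G s c := by
          intro s hs
          have hs0 : (0:ℝ) < s := hs
          have hsin : (0:ℝ) ≤ Real.sin (π * c) := by
            apply Real.sin_nonneg_of_nonneg_of_le_pi (le_of_lt (mul_pos Real.pi_pos hc.1))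
            nlinarith [Real.pi_pos, hc.2]
          show ‖G s c‖ = G s c
          apply norm_of_nonneg
          apply div_nonneg (mul_nonneg (Real.rpow_nonneg hs0.le _) hsin) (by linarith)
        have heqn : ∫ s, ‖Function.uncurry G (s, c)‖ ∂μ = ∫ s, G s c ∂μ := by
          rw [hμ] at *
          exact setIntegral_congr_fun measurableSet_Ioi hnn
        exact ((heqn.trans (hGc c hc).2)).symm
  -- swap
  have hswap := integral_integral_swap hInt
  -- RHS value
  have hR : ∫ c, ∫ s, G s c ∂μ ∂ν = π * ((y - 1) / (y * Real.log y)) := by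
    have h1 : ∫ c, ∫ s, G s c ∂μ ∂ν = ∫ c in Ioc (0:ℝ) 1, π * y ^ (c-1) := by
      apply integral_congr_ae
      filter_upwards [hae] with c hc
      exact (hGc c hc).2
    rw [h1, ← intervalIntegral.integral_of_le zero_le_one, intervalIntegral.integral_const_mul,
      lemD hy]
  -- LHS inner computation
  have hL : ∀ s ∈ Ioi (0:ℝ), ∫ c, G s c ∂ν
      = π * ((s + 1) / (s * ((Real.log s) ^ 2 + π ^ 2) * (s + y))) := by
    intro s hs
    have hs0 : (0:ℝ) < s := hs
    have h1 : ∫ c, G s c ∂ν = ∫ c in (0:ℝ)..1, G s c :=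
      (intervalIntegral.integral_of_le zero_le_one).symm
    have h2 : ∀ c : ℝ, G s c = (s ^ c * Real.sin (π * c)) * (s * (s + y))⁻¹ := by
      intro c
      simp only [hG]
      rw [show (c - 1 : ℝ) = c + (-1) by ring, Real.rpow_add hs0, Real.rpow_neg_one]
      field_simp
      try ring
    rw [h1]
    simp_rw [h2]
    rw [intervalIntegral.integral_mul_const, lemA hs0]
    have hden : s * ((Real.log s)^2 + π^2) * (s + y) ≠ 0 := by positivity
    field_simp
    try ring
  constructor
  · have hπ : (π:ℝ) ≠ 0 := Real.pi_ne_zero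
    have h2 : ∫ s, (∫ c, G s c ∂ν) ∂μ
        = π * ∫ s in Ioi (0:ℝ), (s + 1) / (s * ((Real.log s) ^ 2 + π ^ 2) * (s + y)) := by
      rw [hμ]
      rw [setIntegral_congr_fun measurableSet_Ioi hL, integral_const_mul]
    have := h2.symm.trans (hswap.trans hR)
    exact mul_left_cancel₀ hπ this
  · have hmarg := hInt.integral_prod_left
    have : Integrable (fun s => π * ((s + 1) / (s * ((Real.log s) ^ 2 + π ^ 2) * (s + y)))) μ := by
      refine (integrableOn_congr_fun ?_ measurableSet_Ioi).mp hmarg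
      exact hL
    have h3 := this.div_const π
    refine (integrableOn_congr_fun ?_ measurableSet_Ioi).mp h3
    intro s hs
    exact mul_div_cancel_left₀ _ Real.pi_ne_zero

theorem stmt_1 :
    (∀ x : ℝ, 0 < x →
      x / ((1 + x) * Real.log (1 + x)) =
        ∫ t in Set.Ioi (1 : ℝ),
          t / ((t - 1) * ((Real.log (t - 1)) ^ 2 + Real.pi ^ 2)) * (x + t)⁻¹) ∧
    (∀ t ∈ Set.Ioi (1 : ℝ), 0 ≤ t / ((t - 1) * ((Real.log (t - 1)) ^ 2 + Real.pi ^ 2))) ∧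
    IntegrableOn
      (fun t : ℝ => t / ((t - 1) * ((Real.log (t - 1)) ^ 2 + Real.pi ^ 2)) * (1 + t)⁻¹)
      (Set.Ioi (1 : ℝ)) := by
  refine ⟨?_, ?_, ?_⟩
  · intro x hx
    have hy : (1:ℝ) < 1 + x := by linarith
    calc x / ((1 + x) * Real.log (1 + x))
        = (1 + x - 1) / ((1 + x) * Real.log (1 + x)) := by norm_num
      _ = ∫ s in Ioi (0:ℝ), (s + 1) / (s * ((Real.log s) ^ 2 + π ^ 2) * (s + (1 + x))) :=
          ((lemKey hy).1).symm
      _ = ∫ s in Ioi (0:ℝ),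
            (fun t : ℝ => t / ((t - 1) * ((Real.log (t - 1)) ^ 2 + π ^ 2)) * (x + t)⁻¹) (s + 1) := by
          refine setIntegral_congr_fun measurableSet_Ioi ?_
          intro s hs
          have hs0 : (0:ℝ) < s := hs
          simp only [add_sub_cancel_right]
          have hD : (0:ℝ) < (Real.log s) ^ 2 + π ^ 2 := by positivity
          have h3 : (0:ℝ) < x + (s + 1) := by linarith
          field_simp [hs0.ne', hD.ne', h3.ne']
          ring_nf
      _ = ∫ t in Ioi (1:ℝ), t / ((t - 1) * ((Real.log (t - 1)) ^ 2 + π ^ 2)) * (x + t)⁻¹ :=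
          (shift_eq (fun t : ℝ =>
            t / ((t - 1) * ((Real.log (t - 1)) ^ 2 + π ^ 2)) * (x + t)⁻¹)).symm
  · intro t ht
    have h1 : (0:ℝ) < t - 1 := by simpa [sub_pos] using ht
    have hD : (0:ℝ) < (Real.log (t-1)) ^ 2 + π ^ 2 := by positivity
    exact div_nonneg (by linarith) (le_of_lt (mul_pos h1 hD))
  · rw [shift_int]
    have h2 : (1:ℝ) < 2 := one_lt_two
    refine (integrableOn_congr_fun ?_ measurableSet_Ioi).mpr (lemKey h2).2
    intro s hs
    have hs0 : (0:ℝ) < s := hs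
    simp only [add_sub_cancel_right]
    have hD : (0:ℝ) < (Real.log s) ^ 2 + π ^ 2 := by positivity
    have h3 : (0:ℝ) < 1 + (s + 1) := by linarith
    field_simp [hs0.ne', hD.ne', h3.ne']
    ring_nf
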